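/- Let (X, ρ) be a metric space, λ ∈ Δ∞, and x = (x_k)_{k∈ℕ} a sequence in X. Then x is λ-statistically convergent to L ∈ X if and only if there exists a sequence g = (g_k)_{k∈ℕ} in X such that the set {k ∈ ℕ : x_k ≠ g_k} has λ-density zero and (g_k) converges to L in the metric topology. (This is the paper's Theorem 3.5, specialized to the PM space induced by a metric, where F_{xy} = ε_{ρ(x,y)} and the strong topology is the metric topology.) -/
import Mathlib


open Filter Topology

/-- `l` belongs to the class `Δ∞`: a nondecreasing (for indices `≥ 1`) sequence of
positive reals tending to `∞` with `l 1 = 1` and `l (n+1) ≤ l n + 1`. -/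
def DeltaInfty (l : ℕ → ℝ) : Prop :=
  (∀ n, 1 ≤ n → 0 < l n) ∧ (∀ m n, 1 ≤ m → m ≤ n → l m ≤ l n) ∧
    Tendsto l atTop atTop ∧ l 1 = 1 ∧ ∀ n, 1 ≤ n → l (n + 1) ≤ l n + 1

open Classical in
/-- The number of elements of `M` in the window `I_n = [n - l n + 1, n] ∩ ℕ`. -/
noncomputable def lamCount (l : ℕ → ℝ) (M : Set ℕ) (n : ℕ) : ℕ :=
  ((Finset.Icc 1 n).filter (fun (k : ℕ) => ((n : ℝ) - l n + 1 ≤ (k : ℝ)) ∧ k ∈ M)).card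

/-- `M ⊆ ℕ` has `λ`-density `r`: `|{k ∈ I_n : k ∈ M}| / l n → r`. -/
def lamDensity (l : ℕ → ℝ) (M : Set ℕ) (r : ℝ) : Prop :=
  Tendsto (fun n => (lamCount l M n : ℝ) / l n) atTop (𝓝 r)

/-- `x` is `λ`-statistically convergent to `L` in the metric space `X`. -/
def LamStatConv {X : Type*} [MetricSpace X] (l : ℕ → ℝ) (x : ℕ → X) (L : X) : Prop :=
  ∀ ε > 0, lamDensity l {k | ε ≤ dist (x k) L} 0

lemma lamCount_mono {l : ℕ → ℝ} {M M' : Set ℕ} (n : ℕ)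
    (h : ∀ k, k ≤ n → k ∈ M → k ∈ M') : lamCount l M n ≤ lamCount l M' n := by
  classical
  apply Finset.card_le_card
  intro k hk
  simp only [Finset.mem_filter, Finset.mem_Icc] at hk ⊢
  exact ⟨hk.1, hk.2.1, h k hk.1.2 hk.2.2⟩

lemma lamCount_union_le {l : ℕ → ℝ} (M M' : Set ℕ) (n : ℕ) :
    lamCount l (M ∪ M') n ≤ lamCount l M n + lamCount l M' n := by
  classical
  unfold lamCount
  refine le_trans (Finset.card_le_card ?_) (Finset.card_union_le _ _)
  intro k hk
  simp only [Finset.mem_filter, Finset.mem_union, Set.mem_union] at hk ⊢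
  tauto

lemma lamCount_le_of_le {l : ℕ → ℝ} {M : Set ℕ} {N : ℕ} (hM : ∀ k ∈ M, k ≤ N) (n : ℕ) :
    lamCount l M n ≤ N := by
  classical
  calc lamCount l M n ≤ (Finset.Icc 1 N).card := by
        apply Finset.card_le_card
        intro k hk
        simp only [Finset.mem_filter, Finset.mem_Icc] at hk ⊢
        exact ⟨hk.1.1, hM k hk.2.2⟩
    _ = N := by simp

/-- Squeeze: if `lamCount M n ≤ lamCount M₁ n + C` eventually, `M₁` has density `0`,
then `M` has density `0`. -/
lemma lamDensity_zero_of_le {l : ℕ → ℝ} (hl : DeltaInfty l) {M M₁ : Set ℕ} {C : ℝ}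
    (h1 : lamDensity l M₁ 0)
    (h : ∀ᶠ n in atTop, (lamCount l M n : ℝ) ≤ (lamCount l M₁ n : ℝ) + C) :
    lamDensity l M 0 := by
  obtain ⟨hpos, -, htop, -, -⟩ := hl
  have hC : Tendsto (fun n => ((lamCount l M₁ n : ℝ) + C) / l n) atTop (𝓝 0) := by
    have := h1.add (Tendsto.div_atTop (tendsto_const_nhds (x := C)) htop)
    simpa [add_div] using this
  refine tendsto_of_tendsto_of_tendsto_of_le_of_le' tendsto_const_nhds hC ?_ ?_
  · filter_upwards [eventually_ge_atTop 1] with n hn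
    exact div_nonneg (Nat.cast_nonneg _) (hpos n hn).le
  · filter_upwards [h, eventually_ge_atTop 1] with n hn h1n
    exact div_le_div_of_nonneg_right hn (hpos n h1n).le |>.trans_eq rfl

theorem lamStatConv_iff_agrees_with_convergent {X : Type*} [MetricSpace X] (l : ℕ → ℝ)
    (hl : DeltaInfty l) (x : ℕ → X) (L : X) :
    LamStatConv l x L ↔
      ∃ g : ℕ → X, lamDensity l {k | x k ≠ g k} 0 ∧ Tendsto g atTop (𝓝 L) := by
  classical
  constructor
  · intro hx
    -- choose thresholds
    have hA : ∀ j : ℕ, lamDensity l {k | 1/(j+1 : ℝ) ≤ dist (x k) L} 0 := by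
      intro j
      exact hx _ (by positivity)
    -- choose N j with ratio small beyond N j
    have hN : ∀ j : ℕ, ∃ N : ℕ, ∀ n ≥ N,
        (lamCount l {k | 1/(j+1 : ℝ) ≤ dist (x k) L} n : ℝ) / l n < 1/(j+1 : ℝ) := by
      intro j
      have := (hA j).eventually (eventually_lt_nhds (show (0:ℝ) < 1/(j+1:ℝ) by positivity))
      exact eventually_atTop.1 this
    choose N hNspec using hN
    -- build strictly increasing M
    let M : ℕ → ℕ := fun j => Nat.rec 0 (fun j ih => max (ih + 1) (N (j+1))) j
    have hM0 : M 0 = 0 := rfl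
    have hMsucc : ∀ j, M (j+1) = max (M j + 1) (N (j+1)) := fun j => rfl
    have hMmono : StrictMono M := strictMono_nat_of_lt_succ (fun j => by
      rw [hMsucc]; exact lt_of_lt_of_le (Nat.lt_succ_self _) (le_max_left _ _))
    have hMge : ∀ j, j ≤ M j := fun j => by
      simpa using hMmono.le_apply
    have hMN : ∀ j, 1 ≤ j → N j ≤ M j := by
      intro j hj
      obtain ⟨i, rfl⟩ := Nat.exists_eq_add_of_le hj
      rw [show 1 + i = i + 1 by omega, hMsucc]
      exact le_max_right _ _
    -- block index
    let J : ℕ → ℕ := fun n => @Nat.findGreatest (fun j => M j ≤ n) (fun j => Nat.decLe (M j) n) n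
    have hJspec : ∀ n, M (J n) ≤ n := fun n =>
      @Nat.findGreatest_spec 0 (fun j => M j ≤ n) (fun j => Nat.decLe (M j) n) n
        (Nat.zero_le n) (hM0.trans_le (Nat.zero_le n))
    have hJge : ∀ j n, j ≤ n → M j ≤ n → j ≤ J n := fun j n hjn hMjn =>
      @Nat.le_findGreatest j (fun j => M j ≤ n) (fun j => Nat.decLe (M j) n) n hjn hMjn
    have hJmono : ∀ k n, k ≤ n → J k ≤ J n := by
      intro k n hkn
      exact hJge _ _ (le_trans (@Nat.findGreatest_le (fun j => M j ≤ k) (fun j => Nat.decLe (M j) k) k) hkn)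
        (le_trans (hJspec k) hkn)
    -- the modified sequence
    set g : ℕ → X := fun k => if dist (x k) L < 1/(J k + 1 : ℝ) then x k else L with hg
    have hdist : ∀ k, x k ≠ g k → 1/(J k + 1 : ℝ) ≤ dist (x k) L := by
      intro k hk
      by_contra hlt
      push_neg at hlt
      rw [hg] at hk
      simp only [ne_eq] at hk
      rw [if_pos hlt] at hk
      exact hk rfl
    refine ⟨g, ?_, ?_⟩
    · -- density zero of the bad set
      rw [lamDensity, Metric.tendsto_atTop]
      intro ε hε
      obtain ⟨j, hjε⟩ := exists_nat_one_div_lt hε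
      refine ⟨max (M (j+1)) 1, fun n hn => ?_⟩
      have hn1 : 1 ≤ n := le_trans (le_max_right _ _) hn
      have hnM : M (j+1) ≤ n := le_trans (le_max_left _ _) hn
      have hJn : j + 1 ≤ J n := hJge _ _ (le_trans (hMge _) hnM) hnM
      have hJn1 : 1 ≤ J n := le_trans (Nat.le_add_left 1 j) hJn
      -- lamCount bad ≤ lamCount A_{J n}
      have hsub : (lamCount l {k | x k ≠ g k} n : ℝ) ≤
          (lamCount l {k | 1/(J n + 1 : ℝ) ≤ dist (x k) L} n : ℝ) := by
        have := lamCount_mono (l := l) (M := {k | x k ≠ g k})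
          (M' := {k | 1/(J n + 1 : ℝ) ≤ dist (x k) L}) n (fun k hk hkB => by
            have h1 : 1/(J k + 1 : ℝ) ≤ dist (x k) L := hdist k hkB
            have h2 : (1:ℝ)/(J n + 1) ≤ 1/(J k + 1) := by
              apply one_div_le_one_div_of_le (by positivity)
              have := hJmono k n hk
              linarith [(Nat.cast_le (α := ℝ)).2 this]
            exact le_trans h2 h1)
        exact_mod_cast this
      have hratio : (lamCount l {k | 1/(J n + 1 : ℝ) ≤ dist (x k) L} n : ℝ) / l n
          < 1/(J n + 1 : ℝ) := by
        apply hNspec (J n) n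
        exact le_trans (hMN (J n) hJn1) (hJspec n)
      have hpos := hl.1 n hn1
      have hnonneg : (0:ℝ) ≤ (lamCount l {k | x k ≠ g k} n : ℝ) / l n :=
        div_nonneg (Nat.cast_nonneg _) hpos.le
      rw [Real.dist_eq, sub_zero, abs_of_nonneg hnonneg]
      calc (lamCount l {k | x k ≠ g k} n : ℝ) / l n
          ≤ (lamCount l {k | 1/(J n + 1 : ℝ) ≤ dist (x k) L} n : ℝ) / l n :=
            div_le_div_of_nonneg_right hsub hpos.le |>.trans_eq rfl
        _ < 1/(J n + 1 : ℝ) := hratio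
        _ ≤ 1/(j + 1 : ℝ) := by
            apply one_div_le_one_div_of_le (by positivity)
            have := (Nat.cast_le (α := ℝ)).2 hJn
            push_cast at this
            linarith
        _ < ε := hjε
    · -- g tends to L
      rw [Metric.tendsto_atTop]
      intro ε hε
      obtain ⟨j, hjε⟩ := exists_nat_one_div_lt hε
      refine ⟨M j, fun k hk => ?_⟩
      have hJk : j ≤ J k := hJge j k (le_trans (hMge j) hk) hk
      by_cases hcase : dist (x k) L < 1/(J k + 1 : ℝ)
      · have : g k = x k := by rw [hg]; exact if_pos hcase
        rw [this]
        calc dist (x k) L < 1/(J k + 1 : ℝ) := hcase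
          _ ≤ 1/(j + 1 : ℝ) := by
              apply one_div_le_one_div_of_le (by positivity)
              linarith [(Nat.cast_le (α := ℝ)).2 hJk]
          _ < ε := hjε
      · have : g k = L := by rw [hg]; exact if_neg hcase
        rw [this]
        simpa using hε
  · rintro ⟨g, hd, hg⟩
    intro ε hε
    rw [Metric.tendsto_atTop] at hg
    obtain ⟨Ng, hNg⟩ := hg ε hε
    apply lamDensity_zero_of_le hl hd (C := Ng)
    filter_upwards with n
    have hsub : lamCount l {k | ε ≤ dist (x k) L} n ≤
        lamCount l ({k | x k ≠ g k} ∪ {k | k ≤ Ng}) n := by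
      apply lamCount_mono
      intro k _ hk
      by_cases hxg : x k = g k
      · right
        by_contra hkN
        simp only [Set.mem_setOf_eq, not_le] at hkN
        have := hNg k hkN.le
        rw [← hxg] at this
        exact absurd hk (not_le.2 this)
      · exact Or.inl hxg
    have h2 := lamCount_union_le (l := l) {k | x k ≠ g k} {k | k ≤ Ng} n
    have h3 : lamCount l {k | k ≤ Ng} n ≤ Ng := lamCount_le_of_le (fun k hk => hk) n
    have : lamCount l {k | ε ≤ dist (x k) L} n ≤ lamCount l {k | x k ≠ g k} n + Ng := by
      omega
    exact_mod_cast this
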